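/- Let n ≥ 1, m ≥ 0, T > 0, and let a : ℝⁿ → ℝⁿ be measurable with ‖a‖ := esssup_x (1+|x|)^{n+1+m} |a(x)| < ∞. Then there is a constant C₀ = C₀(n,m) such that for all t ∈ (0,T] and almost every x ∈ ℝⁿ, (1+|x|)^{n+1+m} |e^{tΔ}a(x)| ≤ C₀ (1 + T^{(m+1)/2}) ‖a‖, where e^{tΔ}a = g_t * a is the heat semigroup. -/

import Mathlib

open MeasureTheory Real
open scoped Nat

/-- The Gaussian heat kernel on ℝⁿ. -/
noncomputable def heatKernel (n : ℕ) (t : ℝ) (x : EuclideanSpace ℝ (Fin n)) : ℝ :=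
  (4 * Real.pi * t) ^ (-(n : ℝ) / 2) * Real.exp (-‖x‖ ^ 2 / (4 * t))

lemma heatKernel_nonneg (n : ℕ) {t : ℝ} (ht : 0 < t) (z : EuclideanSpace ℝ (Fin n)) :
    0 ≤ heatKernel n t z := by
  unfold heatKernel
  have : (0:ℝ) < 4 * Real.pi * t := by positivity
  positivity

lemma aux_exp_le (k : ℕ) {s : ℝ} (hs : 0 < s) :
    Real.exp (-s) ≤ (k ! : ℝ) * ((Real.sqrt s)⁻¹) ^ k := by
  have hk1 : (1:ℝ) ≤ k ! := by exact_mod_cast Nat.one_le_iff_ne_zero.mpr (Nat.factorial_ne_zero k)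
  have hsq : 0 < Real.sqrt s := Real.sqrt_pos.mpr hs
  rcases le_total s 1 with h | h
  · have h1 : Real.exp (-s) ≤ 1 := by
      calc Real.exp (-s) ≤ Real.exp 0 := Real.exp_le_exp.mpr (by linarith)
        _ = 1 := Real.exp_zero
    have h2 : (1:ℝ) ≤ (Real.sqrt s)⁻¹ := by
      rw [le_inv_comm₀]
      · simpa using sqrt_le_one.mpr h
      · norm_num
      · exact hsq
    calc Real.exp (-s) ≤ 1 := h1
      _ ≤ 1 * 1 := by norm_num
      _ ≤ (k ! : ℝ) * ((Real.sqrt s)⁻¹) ^ k := by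
          apply mul_le_mul hk1 (one_le_pow₀ ?_) zero_le_one (by positivity)
          exact h2
  · have h1s : (1:ℝ) ≤ Real.sqrt s := by
      rw [show (1:ℝ) = Real.sqrt 1 by simp]
      exact Real.sqrt_le_sqrt h
    have hss : Real.sqrt s * Real.sqrt s = s := Real.mul_self_sqrt hs.le
    have h3 : Real.sqrt s ≤ s := by nlinarith
    have h4 : (Real.sqrt s) ^ k / k ! ≤ Real.exp (Real.sqrt s) := by
      calc (Real.sqrt s) ^ k / k ! ≤ ∑ i ∈ Finset.range (k+1), (Real.sqrt s) ^ i / i ! := by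
            apply Finset.single_le_sum (f := fun i => (Real.sqrt s) ^ i / i !)
            · intro i _; positivity
            · exact Finset.self_mem_range_succ k
        _ ≤ Real.exp (Real.sqrt s) := Real.sum_le_exp_of_nonneg (Real.sqrt_nonneg s) _
    have h5 : Real.exp (-s) ≤ Real.exp (-(Real.sqrt s)) := Real.exp_le_exp.mpr (by linarith)
    have h6 : Real.exp (-(Real.sqrt s)) = (Real.exp (Real.sqrt s))⁻¹ := Real.exp_neg _
    have hpk : 0 < (Real.sqrt s) ^ k := pow_pos hsq k
    have h7 : (Real.exp (Real.sqrt s))⁻¹ ≤ ((Real.sqrt s) ^ k / k !)⁻¹ := by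
      apply inv_anti₀ (by positivity) h4
    calc Real.exp (-s) ≤ (Real.exp (Real.sqrt s))⁻¹ := by rw [← h6]; exact h5
      _ ≤ ((Real.sqrt s) ^ k / k !)⁻¹ := h7
      _ = (k ! : ℝ) * ((Real.sqrt s)⁻¹) ^ k := by
          rw [inv_div, inv_pow]
          ring

lemma heatKernel_le (n m : ℕ) {t : ℝ} (ht : 0 < t) {z : EuclideanSpace ℝ (Fin n)}
    (hz : 0 < ‖z‖) :
    heatKernel n t z ≤
      ((n+1+m)! : ℝ) * 2 ^ (n+1+m) * (Real.sqrt t) ^ (m+1) * (‖z‖⁻¹) ^ (n+1+m) := by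
  have h4πt : (0:ℝ) < 4 * Real.pi * t := by positivity
  have hst : 0 < Real.sqrt t := Real.sqrt_pos.mpr ht
  have hA : (4 * Real.pi * t) ^ (-(n:ℝ)/2) ≤ ((Real.sqrt t)⁻¹) ^ n := by
    have h1 : (4 * Real.pi * t) ^ (-(n:ℝ)/2) = ((Real.sqrt (4 * Real.pi * t))⁻¹) ^ n := by
      rw [show (-(n:ℝ)/2) = (-(1/2)) * (n:ℕ) by ring,
        Real.rpow_mul h4πt.le, Real.rpow_natCast]
      congr 1
      rw [show (-(1/2) : ℝ) = -(1/2) from rfl, Real.rpow_neg h4πt.le, Real.sqrt_eq_rpow]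
    rw [h1]
    have h2 : Real.sqrt t ≤ Real.sqrt (4 * Real.pi * t) :=
      Real.sqrt_le_sqrt (by nlinarith [Real.pi_gt_three])
    exact pow_le_pow_left₀ (by positivity) (inv_anti₀ hst h2) n
  have hs : 0 < ‖z‖ ^ 2 / (4 * t) := by positivity
  have hB := aux_exp_le (n+1+m) hs
  have hsq : Real.sqrt (‖z‖ ^ 2 / (4 * t)) = ‖z‖ / (2 * Real.sqrt t) := by
    rw [Real.sqrt_div (sq_nonneg ‖z‖), Real.sqrt_sq (norm_nonneg z),
      show (4:ℝ) * t = 2 ^ 2 * t by norm_num, Real.sqrt_mul (by norm_num),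
      Real.sqrt_sq (by norm_num : (0:ℝ) ≤ 2)]
  have hinv : (Real.sqrt (‖z‖ ^ 2 / (4 * t)))⁻¹ = 2 * Real.sqrt t * ‖z‖⁻¹ := by
    rw [hsq, inv_div]
    ring
  have step : heatKernel n t z ≤
      ((Real.sqrt t)⁻¹) ^ n * (((n+1+m)! : ℝ) * (2 * Real.sqrt t * ‖z‖⁻¹) ^ (n+1+m)) := by
    rw [heatKernel, show -‖z‖ ^ 2 / (4 * t) = -(‖z‖ ^ 2 / (4 * t)) from neg_div _ _]
    rw [← hinv]
    exact mul_le_mul hA hB (Real.exp_nonneg _) (by positivity)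
  refine step.trans_eq ?_
  rw [mul_pow, mul_pow]
  have hne : Real.sqrt t ≠ 0 := hst.ne'
  field_simp
  rw [show n+1+m = n+(m+1) by omega, pow_add, one_div, inv_pow,
    inv_mul_cancel_left₀ (pow_ne_zero n hne)]

lemma integral_heatKernel (n : ℕ) {t : ℝ} (ht : 0 < t) :
    ∫ z : EuclideanSpace ℝ (Fin n), heatKernel n t z = 1 := by
  have hb : (0:ℝ) < 1 / (4 * t) := by positivity
  have h := GaussianFourier.integral_rexp_neg_mul_sq_norm (V := EuclideanSpace ℝ (Fin n)) hb
  have h4πt : (0:ℝ) < 4 * Real.pi * t := by positivity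
  unfold heatKernel
  rw [MeasureTheory.integral_const_mul]
  have heq : (fun z : EuclideanSpace ℝ (Fin n) => Real.exp (-‖z‖ ^ 2 / (4 * t)))
      = fun z : EuclideanSpace ℝ (Fin n) => Real.exp (-(1 / (4 * t)) * ‖z‖ ^ 2) := by
    funext z; congr 1; ring
  rw [heq, h, finrank_euclideanSpace_fin]
  rw [show Real.pi / (1 / (4 * t)) = 4 * Real.pi * t by field_simp]
  rw [← Real.rpow_add h4πt, show (-(n:ℝ)/2 + (n:ℝ)/2) = 0 by ring, Real.rpow_zero]

lemma integrable_heatKernel (n : ℕ) {t : ℝ} (ht : 0 < t) :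
    Integrable (heatKernel n t) := by
  have hb : (0:ℝ) < 1 / (4 * t) := by positivity
  have h : Integrable (fun v : EuclideanSpace ℝ (Fin n) =>
      Complex.exp (-((1 / (4 * t) : ℝ) : ℂ) * (‖v‖ : ℂ) ^ 2)) := by
    have := GaussianFourier.integrable_cexp_neg_mul_sq_norm_add (V := EuclideanSpace ℝ (Fin n))
      (b := ((1 / (4 * t) : ℝ) : ℂ)) (by simpa using hb) 0 0
    simpa using this
  have h2 := h.norm
  refine ((h2.const_mul ((4 * Real.pi * t) ^ (-(n:ℝ)/2))).congr
    (Filter.Eventually.of_forall fun v => ?_))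
  show (4 * Real.pi * t) ^ (-(n:ℝ)/2) * ‖Complex.exp (-((1 / (4 * t) : ℝ) : ℂ) * (‖v‖ : ℂ) ^ 2)‖
      = heatKernel n t v
  unfold heatKernel
  congr 1
  rw [Complex.norm_exp]
  congr 1
  have : (-((1 / (4 * t) : ℝ) : ℂ) * (‖v‖ : ℂ) ^ 2) = (((-(1 / (4 * t)) * ‖v‖ ^ 2 : ℝ)) : ℂ) := by
    push_cast; ring
  rw [this, Complex.ofReal_re]
  ring

lemma integrable_inv_pow (n k : ℕ) (hk : n < k) :
    Integrable (fun y : EuclideanSpace ℝ (Fin n) => ((1 + ‖y‖) ^ k)⁻¹) := by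
  have h := integrable_one_add_norm (E := EuclideanSpace ℝ (Fin n))
    (μ := (volume : Measure (EuclideanSpace ℝ (Fin n)))) (r := (k:ℝ))
    (by rw [finrank_euclideanSpace_fin]; exact_mod_cast hk)
  refine h.congr (Filter.Eventually.of_forall fun y => ?_)
  show (1 + ‖y‖) ^ (-(k:ℝ)) = ((1 + ‖y‖) ^ k)⁻¹
  rw [Real.rpow_neg (by positivity), Real.rpow_natCast]

set_option maxHeartbeats 1000000 in
/-- There is C₀ = C₀(n,m) such that for any T > 0 and any measurable field a
with esssup (1+|x|)^{n+1+m}|a(x)| ≤ M, the heat evolution e^{tΔ}a = g_t * a satisfies, for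
all t ∈ (0,T] and a.e. x, (1+|x|)^{n+1+m}|e^{tΔ}a(x)| ≤ C₀ (1+T^{(m+1)/2}) M. -/
theorem heat_semigroup_weighted_bound (n m : ℕ) (hn : 1 ≤ n) :
    ∃ C₀ > 0, ∀ (T : ℝ), 0 < T →
      ∀ (a : EuclideanSpace ℝ (Fin n) → EuclideanSpace ℝ (Fin n)), Measurable a →
      ∀ (M : ℝ),
      (∀ᵐ x ∂(volume : Measure (EuclideanSpace ℝ (Fin n))),
        (1 + ‖x‖) ^ (n + 1 + m) * ‖a x‖ ≤ M) →
      ∀ t ∈ Set.Ioc (0 : ℝ) T,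
        ∀ᵐ x ∂(volume : Measure (EuclideanSpace ℝ (Fin n))),
          (1 + ‖x‖) ^ (n + 1 + m) * ‖∫ y, heatKernel n t (x - y) • a y‖ ≤
            C₀ * (1 + T ^ (((m : ℝ) + 1) / 2)) * M := by
  classical
  set C₂ : ℝ := ((n+1+m)! : ℝ) * 2 ^ (n+1+m) with hC₂def
  have hC₂pos : 0 < C₂ := by positivity
  have hIntJ : Integrable (fun y : EuclideanSpace ℝ (Fin n) => ((1 + ‖y‖) ^ (n+1+m))⁻¹) :=
    integrable_inv_pow n (n+1+m) (by omega)
  obtain ⟨Cn, hCndef⟩ : ∃ c : ℝ, c = ∫ y : EuclideanSpace ℝ (Fin n), ((1 + ‖y‖) ^ (n+1+m))⁻¹ :=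
    ⟨_, rfl⟩
  have hCn0 : 0 ≤ Cn := hCndef ▸ integral_nonneg fun y => by positivity
  refine ⟨2 ^ (n+1+m) + 4 ^ (n+1+m) * C₂ * Cn + 1, by positivity, ?_⟩
  intro T hT a ha M hM t ht
  obtain ⟨ht0, htT⟩ := ht
  have hM0 : 0 ≤ M := by
    obtain ⟨x, hx⟩ := hM.exists
    exact le_trans (by positivity) hx
  have hTp0 : 0 ≤ T ^ (((m:ℝ)+1)/2) := Real.rpow_nonneg hT.le _
  have hTp : (Real.sqrt T) ^ (m+1) = T ^ (((m:ℝ)+1)/2) := by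
    rw [Real.sqrt_eq_rpow, ← Real.rpow_natCast (T ^ ((1:ℝ)/2)) (m+1), ← Real.rpow_mul hT.le]
    congr 1
    push_cast
    ring
  have hstT : (Real.sqrt t) ^ (m+1) ≤ (Real.sqrt T) ^ (m+1) :=
    pow_le_pow_left₀ (Real.sqrt_nonneg t) (Real.sqrt_le_sqrt htT) (m+1)
  refine Filter.Eventually.of_forall fun x => ?_
  have hgx : Integrable (fun y => heatKernel n t (x - y)) :=
    (integrable_heatKernel n ht0).comp_sub_left x
  have hgx0 : ∀ y, 0 ≤ heatKernel n t (x - y) := fun y => heatKernel_nonneg n ht0 _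
  have hgint : (∫ y, heatKernel n t (x - y)) = 1 := by
    rw [MeasureTheory.integral_sub_left_eq_self (heatKernel n t) volume x]
    exact integral_heatKernel n ht0
  have haM : ∀ᵐ y ∂(volume : Measure (EuclideanSpace ℝ (Fin n))), ‖a y‖ ≤ M := by
    filter_upwards [hM] with y hy
    have h1 : (1:ℝ) ≤ (1 + ‖y‖) ^ (n+1+m) := one_le_pow₀ (by linarith [norm_nonneg y])
    nlinarith [norm_nonneg (a y)]
  have hKcont : Continuous (heatKernel n t) := by
    unfold heatKernel
    exact continuous_const.mul (Real.continuous_exp.comp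
      (((continuous_norm.pow 2).neg).div_const (4 * t)))
  have hmeasg : AEStronglyMeasurable (fun y => heatKernel n t (x - y))
      (volume : Measure (EuclideanSpace ℝ (Fin n))) :=
    (hKcont.comp (continuous_const.sub continuous_id)).aestronglyMeasurable
  have hmeas : AEStronglyMeasurable (fun y => heatKernel n t (x - y) • a y)
      (volume : Measure (EuclideanSpace ℝ (Fin n))) :=
    hmeasg.smul ha.aestronglyMeasurable
  have hfi : Integrable (fun y => heatKernel n t (x - y) • a y) := by
    refine (hgx.const_mul M).mono' hmeas ?_
    filter_upwards [haM] with y hy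
    rw [norm_smul, Real.norm_eq_abs, abs_of_nonneg (hgx0 y)]
    calc heatKernel n t (x - y) * ‖a y‖ ≤ heatKernel n t (x - y) * M :=
          mul_le_mul_of_nonneg_left hy (hgx0 y)
      _ = M * heatKernel n t (x - y) := mul_comm _ _
  have hfi' : Integrable (fun y => heatKernel n t (x - y) * ‖a y‖) := by
    refine hfi.norm.congr (Filter.Eventually.of_forall fun y => ?_)
    simp only [norm_smul, Real.norm_eq_abs, abs_of_nonneg (hgx0 y)]
  have hnorm : ‖∫ y, heatKernel n t (x - y) • a y‖ ≤
      ∫ y, heatKernel n t (x - y) * ‖a y‖ := by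
    refine (norm_integral_le_integral_norm _).trans_eq ?_
    refine integral_congr_ae (Filter.Eventually.of_forall fun y => ?_)
    simp only [norm_smul, Real.norm_eq_abs, abs_of_nonneg (hgx0 y)]
  have hW0 : (0:ℝ) ≤ (1 + ‖x‖) ^ (n+1+m) := by positivity
  rcases lt_or_ge ‖x‖ 1 with hx1 | hx1
  · -- small x
    have hI : (∫ y, heatKernel n t (x - y) * ‖a y‖) ≤ M := by
      calc (∫ y, heatKernel n t (x - y) * ‖a y‖)
          ≤ ∫ y, M * heatKernel n t (x - y) := by
            refine integral_mono_ae hfi' (hgx.const_mul M) ?_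
            filter_upwards [haM] with y hy
            calc heatKernel n t (x - y) * ‖a y‖ ≤ heatKernel n t (x - y) * M :=
                  mul_le_mul_of_nonneg_left hy (hgx0 y)
              _ = M * heatKernel n t (x - y) := mul_comm _ _
        _ = M := by rw [MeasureTheory.integral_const_mul, hgint, mul_one]
    have hWle : (1 + ‖x‖) ^ (n+1+m) ≤ 2 ^ (n+1+m) :=
      pow_le_pow_left₀ (by positivity) (by linarith) _
    calc (1 + ‖x‖) ^ (n+1+m) * ‖∫ y, heatKernel n t (x - y) • a y‖
        ≤ 2 ^ (n+1+m) * M := by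
          have h2 := hnorm.trans hI
          nlinarith [norm_nonneg (∫ y, heatKernel n t (x - y) • a y)]
      _ ≤ (2 ^ (n+1+m) + 4 ^ (n+1+m) * C₂ * Cn + 1) * (1 + T ^ (((m:ℝ)+1)/2)) * M := by
          have h1 : (2:ℝ) ^ (n+1+m) ≤ (2 ^ (n+1+m) + 4 ^ (n+1+m) * C₂ * Cn + 1)
              * (1 + T ^ (((m:ℝ)+1)/2)) := by
            nlinarith [pow_pos (show (0:ℝ) < 2 by norm_num) (n+1+m),
              pow_pos (show (0:ℝ) < 4 by norm_num) (n+1+m),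
              mul_nonneg (mul_nonneg (pow_nonneg (show (0:ℝ) ≤ 4 by norm_num) (n+1+m)) hC₂pos.le) hCn0]
          exact mul_le_mul_of_nonneg_right h1 hM0
  · -- large x
    have hxpos : (0:ℝ) < ‖x‖ := lt_of_lt_of_le one_pos hx1
    set A : ℝ := 2 ^ (n+1+m) * M * ((1 + ‖x‖)⁻¹) ^ (n+1+m) with hAdef
    set B : ℝ := C₂ * (Real.sqrt t) ^ (m+1) * (2 * ‖x‖⁻¹) ^ (n+1+m) with hBdef
    have hA0 : 0 ≤ A := by positivity
    have hB0 : 0 ≤ B := by positivity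
    have key : ∀ᵐ y ∂(volume : Measure (EuclideanSpace ℝ (Fin n))),
        heatKernel n t (x - y) * ‖a y‖ ≤
          A * heatKernel n t (x - y) + B * (M * ((1 + ‖y‖) ^ (n+1+m))⁻¹) := by
      filter_upwards [hM] with y hy
      have hypos : (0:ℝ) < (1 + ‖y‖) ^ (n+1+m) := by positivity
      have hay : ‖a y‖ ≤ M * ((1 + ‖y‖) ^ (n+1+m))⁻¹ := by
        rw [mul_comm, ← div_eq_inv_mul, le_div_iff₀ hypos]
        linarith [hy, mul_comm ((1 + ‖y‖) ^ (n+1+m)) ‖a y‖]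
      rcases le_or_gt (‖x‖/2) ‖y‖ with hy2 | hy2
      · -- far region
        have h2 : (1 + ‖x‖) ≤ 2 * (1 + ‖y‖) := by linarith
        have h3 : (1 + ‖x‖) ^ (n+1+m) ≤ (2 * (1 + ‖y‖)) ^ (n+1+m) :=
          pow_le_pow_left₀ (by positivity) h2 _
        have h4 : ((1 + ‖y‖) ^ (n+1+m))⁻¹ ≤ 2 ^ (n+1+m) * ((1 + ‖x‖) ^ (n+1+m))⁻¹ := by
          rw [mul_pow] at h3
          rw [← div_eq_mul_inv, le_div_iff₀ (by positivity), inv_mul_eq_div,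
            div_le_iff₀ hypos]
          linarith
        have haA : ‖a y‖ ≤ A := by
          calc ‖a y‖ ≤ M * ((1 + ‖y‖) ^ (n+1+m))⁻¹ := hay
            _ ≤ M * (2 ^ (n+1+m) * ((1 + ‖x‖) ^ (n+1+m))⁻¹) :=
                mul_le_mul_of_nonneg_left h4 hM0
            _ = A := by rw [hAdef, inv_pow]; ring
        have hfar : heatKernel n t (x - y) * ‖a y‖ ≤ A * heatKernel n t (x - y) := by
          calc heatKernel n t (x - y) * ‖a y‖ ≤ heatKernel n t (x - y) * A :=
                mul_le_mul_of_nonneg_left haA (hgx0 y)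
            _ = A * heatKernel n t (x - y) := mul_comm _ _
        refine hfar.trans (le_add_of_nonneg_right ?_)
        positivity
      · -- near region
        have hzx : ‖x‖/2 ≤ ‖x - y‖ := by
          have h5 : ‖x‖ - ‖y‖ ≤ ‖x - y‖ := norm_sub_norm_le x y
          linarith
        have hz0 : 0 < ‖x - y‖ := by linarith
        have hginv : ‖x - y‖⁻¹ ≤ 2 * ‖x‖⁻¹ := by
          rw [show 2 * ‖x‖⁻¹ = (‖x‖/2)⁻¹ by rw [inv_div]; ring]
          exact inv_anti₀ (by positivity) hzx
        have hg : heatKernel n t (x - y) ≤ B := by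
          calc heatKernel n t (x - y)
              ≤ C₂ * (Real.sqrt t) ^ (m+1) * (‖x - y‖⁻¹) ^ (n+1+m) := heatKernel_le n m ht0 hz0
            _ ≤ B := by
                rw [hBdef]
                refine mul_le_mul_of_nonneg_left ?_ (by positivity)
                exact pow_le_pow_left₀ (by positivity) hginv _
        calc heatKernel n t (x - y) * ‖a y‖
            ≤ B * (M * ((1 + ‖y‖) ^ (n+1+m))⁻¹) :=
              mul_le_mul hg hay (norm_nonneg _) hB0
          _ ≤ A * heatKernel n t (x - y) + B * (M * ((1 + ‖y‖) ^ (n+1+m))⁻¹) := by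
              refine le_add_of_nonneg_left ?_
              exact mul_nonneg hA0 (hgx0 y)
    have hRHSint : Integrable (fun y => A * heatKernel n t (x - y)
        + B * (M * ((1 + ‖y‖) ^ (n+1+m))⁻¹)) := by
      refine (hgx.const_mul A).add ?_
      exact ((hIntJ.const_mul M).const_mul B)
    have hint2 : (∫ y, heatKernel n t (x - y) * ‖a y‖) ≤ A + B * (M * Cn) := by
      calc (∫ y, heatKernel n t (x - y) * ‖a y‖)
          ≤ ∫ y, (A * heatKernel n t (x - y) + B * (M * ((1 + ‖y‖) ^ (n+1+m))⁻¹)) :=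
            integral_mono_ae hfi' hRHSint key
        _ = A * (∫ y, heatKernel n t (x - y))
            + B * (M * ∫ y : EuclideanSpace ℝ (Fin n), ((1 + ‖y‖) ^ (n+1+m))⁻¹) := by
            rw [MeasureTheory.integral_add (hgx.const_mul A) ((hIntJ.const_mul M).const_mul B),
              MeasureTheory.integral_const_mul, MeasureTheory.integral_const_mul,
              MeasureTheory.integral_const_mul]
        _ = A + B * (M * Cn) := by rw [hgint, mul_one, ← hCndef]
    have hWA : (1 + ‖x‖) ^ (n+1+m) * A = 2 ^ (n+1+m) * M := by
      rw [hAdef, inv_pow, show (1 + ‖x‖) ^ (n+1+m) * (2 ^ (n+1+m) * M * ((1 + ‖x‖) ^ (n+1+m))⁻¹)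
        = 2 ^ (n+1+m) * M * ((1 + ‖x‖) ^ (n+1+m) * ((1 + ‖x‖) ^ (n+1+m))⁻¹) by ring,
        mul_inv_cancel₀ (by positivity), mul_one]
    have hWB : (1 + ‖x‖) ^ (n+1+m) * B ≤ 4 ^ (n+1+m) * C₂ * (Real.sqrt T) ^ (m+1) := by
      have h9 : (1 + ‖x‖) * ‖x‖⁻¹ ≤ 2 := by
        rw [mul_inv_le_iff₀ hxpos]
        linarith
      have h6 : (1 + ‖x‖) * (2 * ‖x‖⁻¹) ≤ 4 := by
        have heq2 : (1 + ‖x‖) * (2 * ‖x‖⁻¹) = 2 * ((1 + ‖x‖) * ‖x‖⁻¹) := by ring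
        rw [heq2]; linarith
      have h8 : ((1 + ‖x‖) * (2 * ‖x‖⁻¹)) ^ (n+1+m) ≤ 4 ^ (n+1+m) :=
        pow_le_pow_left₀ (by positivity) h6 _
      calc (1 + ‖x‖) ^ (n+1+m) * B
          = C₂ * (Real.sqrt t) ^ (m+1) * ((1 + ‖x‖) ^ (n+1+m) * (2 * ‖x‖⁻¹) ^ (n+1+m)) := by
            rw [hBdef]; ring
        _ = C₂ * (Real.sqrt t) ^ (m+1) * ((1 + ‖x‖) * (2 * ‖x‖⁻¹)) ^ (n+1+m) := by
            rw [← mul_pow]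
        _ ≤ C₂ * (Real.sqrt t) ^ (m+1) * 4 ^ (n+1+m) :=
            mul_le_mul_of_nonneg_left h8 (by positivity)
        _ ≤ C₂ * (Real.sqrt T) ^ (m+1) * 4 ^ (n+1+m) := by
            refine mul_le_mul_of_nonneg_right (mul_le_mul_of_nonneg_left hstT hC₂pos.le)
              (by positivity)
        _ = 4 ^ (n+1+m) * C₂ * (Real.sqrt T) ^ (m+1) := by ring
    calc (1 + ‖x‖) ^ (n+1+m) * ‖∫ y, heatKernel n t (x - y) • a y‖
        ≤ (1 + ‖x‖) ^ (n+1+m) * (A + B * (M * Cn)) :=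
          mul_le_mul_of_nonneg_left (hnorm.trans hint2) hW0
      _ = (1 + ‖x‖) ^ (n+1+m) * A + ((1 + ‖x‖) ^ (n+1+m) * B) * (M * Cn) := by ring
      _ ≤ 2 ^ (n+1+m) * M + (4 ^ (n+1+m) * C₂ * (Real.sqrt T) ^ (m+1)) * (M * Cn) := by
          rw [hWA]
          exact add_le_add le_rfl (mul_le_mul_of_nonneg_right hWB (by positivity))
      _ ≤ (2 ^ (n+1+m) + 4 ^ (n+1+m) * C₂ * Cn + 1) * (1 + T ^ (((m:ℝ)+1)/2)) * M := by
          rw [← hTp]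
          set S : ℝ := (Real.sqrt T) ^ (m+1) with hSdef
          have hS0 : 0 ≤ S := by positivity
          have h4k : (0:ℝ) ≤ 4 ^ (n+1+m) := pow_nonneg (by norm_num) _
          have h2k : (0:ℝ) ≤ 2 ^ (n+1+m) := pow_nonneg (by norm_num) _
          have expand : (2 ^ (n+1+m) + 4 ^ (n+1+m) * C₂ * Cn + 1) * (1 + S) * M
              = 2 ^ (n+1+m) * M + (4 ^ (n+1+m) * C₂ * S) * (M * Cn)
                + (4 ^ (n+1+m) * C₂ * Cn * M + M + 2 ^ (n+1+m) * (S * M) + S * M) := by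
            ring
          rw [expand]
          refine le_add_of_nonneg_right ?_
          have r1 : 0 ≤ 4 ^ (n+1+m) * C₂ * Cn * M :=
            mul_nonneg (mul_nonneg (mul_nonneg h4k hC₂pos.le) hCn0) hM0
          have r2 : 0 ≤ 2 ^ (n+1+m) * (S * M) := mul_nonneg h2k (mul_nonneg hS0 hM0)
          have r3 : 0 ≤ S * M := mul_nonneg hS0 hM0
          linarith
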